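/- Let Q be a finite quiver, let d ≥ 2, and let ρ be a d-covering set of paths of Q, each of length d, such that there exists N with the property that every path of Q of length N has a subpath in ρ (finite dimensionality of KQ/(ρ)). Let α and β be distinct loops of Q such that α^d ∈ ρ, β^d ∈ ρ, no element of ρ has the form α^{d-1}γ or γα^{d-1} with γ an arrow distinct from α, and no element of ρ has the form β^{d-1}γ or γβ^{d-1} with γ an arrow distinct from β. Then α and β are based at distinct vertices of Q. -/

import Mathlib

open Quiver

universe u v

variable {V : Type u} [Quiver.{v + 1} V]

/-- The type of paths of a quiver, bundled with their endpoints. -/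
abbrev SPath (V : Type u) [Quiver.{v + 1} V] := Σ a b : V, Quiver.Path a b

/-- The type of arrows of a quiver, bundled with their endpoints. -/
abbrev SArrow (V : Type u) [Quiver.{v + 1} V] := Σ a b : V, a ⟶ b

/-- A set of paths in a quiver, given as a predicate on paths with arbitrary endpoints. -/
abbrev PathSet (V : Type u) [Quiver.{v + 1} V] := ∀ ⦃a b : V⦄, Quiver.Path a b → Prop

/-- `p` is a prefix of `q`. -/
def IsPrefixP {a b c : V} (p : Quiver.Path a b) (q : Quiver.Path a c) : Prop :=
  ∃ p' : Quiver.Path b c, q = p.comp p'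

/-- `p` is a suffix of `q`. -/
def IsSuffixP {a b c : V} (p : Quiver.Path b c) (q : Quiver.Path a c) : Prop :=
  ∃ p' : Quiver.Path a b, q = p'.comp p

/-- `p` is a subpath of `q`. -/
def IsSubpathP {b c a e : V} (p : Quiver.Path b c) (q : Quiver.Path a e) : Prop :=
  ∃ (u : Quiver.Path a b) (v : Quiver.Path c e), q = (u.comp p).comp v

/-- `q` overlaps `p` with overlap `p.comp u`: there are paths `u`, `v` with
`pu = vq` and `1 ≤ ℓ(u) < ℓ(q)`. -/
def OverlapsWith {x y a b : V} (q : Quiver.Path x y) (p : Quiver.Path a b)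
    (u : Quiver.Path b y) : Prop :=
  ∃ v : Quiver.Path a x, p.comp u = v.comp q ∧ 1 ≤ u.length ∧ u.length < q.length

/-- `q` properly overlaps `p` with overlap `p.comp u`: additionally `ℓ(v) ≥ 1`. -/
def ProperlyOverlapsWith {x y a b : V} (q : Quiver.Path x y) (p : Quiver.Path a b)
    (u : Quiver.Path b y) : Prop :=
  ∃ v : Quiver.Path a x, p.comp u = v.comp q ∧ 1 ≤ u.length ∧ u.length < q.length ∧
    1 ≤ v.length

/-- `q` properly overlaps `p` (with some overlap). -/
def ProperlyOverlaps {x y a b : V} (q : Quiver.Path x y) (p : Quiver.Path a b) : Prop :=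
  ∃ u : Quiver.Path b y, ProperlyOverlapsWith q p u

/-- `ρ` is `d`-covering: whenever `pq ∈ ρ`, `qr ∈ ρ` and `ℓ(q) ≥ 1`, every subpath of
`pqr` of length `d` lies in `ρ`. -/
def DCovering (d : ℕ) (ρ : PathSet V) : Prop :=
  ∀ ⦃a b c e : V⦄ (p : Quiver.Path a b) (q : Quiver.Path b c) (r : Quiver.Path c e),
    ρ (p.comp q) → ρ (q.comp r) → 1 ≤ q.length →
    ∀ ⦃x y : V⦄ (s : Quiver.Path x y), s.length = d →
      IsSubpathP s ((p.comp q).comp r) → ρ s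

/-- The sets `R^n` of (iterated maximal) overlaps: `R^0` = trivial paths, `R^1` = arrows,
`R^2 = ρ`, and for `n ≥ 3`, `R^n` consists of the paths `R^{n-1}u` where
`R^{n-1} = R^{n-2}p ∈ R^{n-1}`, some element of `ρ` overlaps `p` with overlap `pu`,
and no element of `ρ` overlaps `p` with overlap a proper prefix of `pu`. -/
def RSet (ρ : PathSet V) : ℕ → PathSet V
  | 0 => fun _ _ p => p.length = 0
  | 1 => fun _ _ p => p.length = 1
  | 2 => ρ
  | n + 3 => fun a e R =>
      ∃ (c : V) (Rp : Quiver.Path a c) (u : Quiver.Path c e),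
        RSet ρ (n + 2) Rp ∧ R = Rp.comp u ∧
        ∃ (b : V) (Rpp : Quiver.Path a b) (p : Quiver.Path b c),
          RSet ρ (n + 1) Rpp ∧ Rp = Rpp.comp p ∧
          (∃ (x : V) (q : Quiver.Path x e), ρ q ∧ OverlapsWith q p u) ∧
          ∀ (x y : V) (q : Quiver.Path x y) (u' : Quiver.Path c y),
            ρ q → OverlapsWith q p u' →
            ¬(IsPrefixP (p.comp u') (p.comp u) ∧ u'.length < u.length)

/-- `δ(n) = (n/2)d` if `n` is even, `((n-1)/2)d + 1` if `n` is odd. -/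
def deltaF (d n : ℕ) : ℕ := if n % 2 = 0 then n / 2 * d else (n - 1) / 2 * d + 1

/-- The `m`-th power of a closed path. -/
def cpow {a : V} (T : Quiver.Path a a) : ℕ → Quiver.Path a a
  | 0 => Quiver.Path.nil
  | n + 1 => (cpow T n).comp T

/-- The list of arrows of a path, in order. -/
def arrowList {a : V} : ∀ {b : V}, Quiver.Path a b → List (SArrow V)
  | _, Quiver.Path.nil => []
  | _, Quiver.Path.cons p e => arrowList p ++ [⟨_, _, e⟩]

/-- A closed trail: a nontrivial closed path with pairwise distinct arrows. -/
def IsClosedTrail {a : V} (T : Quiver.Path a a) : Prop :=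
  1 ≤ T.length ∧ (arrowList T).Nodup

/-- `q` lies on the closed path `T`: `q` is a subpath of `T^m` for some `m ≥ 1`. -/
def LiesOn {x y a : V} (q : Quiver.Path x y) (T : Quiver.Path a a) : Prop :=
  ∃ m : ℕ, 1 ≤ m ∧ IsSubpathP q (cpow T m)

/-- `ρ_T ⊆ ρ`: every path of length `d` lying on `T` belongs to `ρ`. -/
def RhoTSub (d : ℕ) (ρ : PathSet V) {a : V} (T : Quiver.Path a a) : Prop :=
  ∀ ⦃x y : V⦄ (q : Quiver.Path x y), q.length = d → LiesOn q T → ρ q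

/-- `SegChain A L a b p` : the path `p` decomposes as the composite of the listed
segments, each of length `A`. -/
inductive SegChain (A : ℕ) : List (SPath V) → (a b : V) → Quiver.Path a b → Prop
  | nil (a : V) : SegChain A [] a a Quiver.Path.nil
  | cons {a b c : V} (α : Quiver.Path a b) (hα : α.length = A) {p : Quiver.Path b c}
      {L : List (SPath V)} (hp : SegChain A L b c p) :
      SegChain A (⟨a, b, α⟩ :: L) a c (α.comp p)

/-- An `A`-path: a path which decomposes into segments of length `A`. -/
def IsAPath (A : ℕ) {a b : V} (p : Quiver.Path a b) : Prop :=
  ∃ L : List (SPath V), SegChain A L a b p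

/-- `p` is an `A`-subpath of `q`: a subpath which is an `A`-path starting at a position
that is a multiple of `A`. -/
def IsASubpath (A : ℕ) {b c a e : V} (p : Quiver.Path b c) (q : Quiver.Path a e) : Prop :=
  ∃ (u : Quiver.Path a b) (v : Quiver.Path c e),
    q = (u.comp p).comp v ∧ A ∣ u.length ∧ IsAPath A p

/-- A closed `A`-trail: a nontrivial closed `A`-path with pairwise distinct `A`-segments. -/
def IsClosedATrail (A : ℕ) {a : V} (T : Quiver.Path a a) : Prop :=
  ∃ L : List (SPath V), SegChain A L a a T ∧ L ≠ [] ∧ L.Nodup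

/-- The `A`-path `q` lies on the closed `A`-path `T`: `q` is an `A`-subpath of `T^m` for
some `m ≥ 1`. -/
def ALiesOn (A : ℕ) {x y a : V} (q : Quiver.Path x y) (T : Quiver.Path a a) : Prop :=
  ∃ m : ℕ, 1 ≤ m ∧ IsASubpath A q (cpow T m)

/-- `ρ_T ⊆ ρ` in the `(D,A)`-setting: every path of length `D` which lies on `T` as an
`A`-path belongs to `ρ`. -/
def ARhoTSub (D A : ℕ) (ρ : PathSet V) {a : V} (T : Quiver.Path a a) : Prop :=
  ∀ ⦃x y : V⦄ (q : Quiver.Path x y), q.length = D → ALiesOn A q T → ρ q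

/-- The `(D,A)`-overlap property: every path in `ρ` has length `D`, and whenever
`R₂ ∈ ρ` properly overlaps `R₁ ∈ ρ` with overlap `R₁u`, then `ℓ(u) ≥ A` and some
`R₃ ∈ ρ` properly overlaps `R₁` with overlap `R₁u'` where `ℓ(u') = A` and `u'` is a
prefix of `u`. -/
def DAOverlapProperty (D A : ℕ) (ρ : PathSet V) : Prop :=
  (∀ ⦃a b : V⦄ (p : Quiver.Path a b), ρ p → p.length = D) ∧
  ∀ ⦃a b x y : V⦄ (R₁ : Quiver.Path a b) (R₂ : Quiver.Path x y) (u : Quiver.Path b y),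
    ρ R₁ → ρ R₂ → ProperlyOverlapsWith R₂ R₁ u →
    A ≤ u.length ∧
      ∃ (y' : V) (x' : V) (R₃ : Quiver.Path x' y') (u' : Quiver.Path b y'),
        ρ R₃ ∧ ProperlyOverlapsWith R₃ R₁ u' ∧ u'.length = A ∧ IsPrefixP u' u

/-- Condition (C1), part (1), for a loop `α`. -/
def CondLoop (d : ℕ) (ρ : PathSet V) {v : V} (α : v ⟶ v) : Prop :=
  ρ (cpow (Quiver.Hom.toPath α) d) ∧
  (∀ ⦃w : V⦄ (β : v ⟶ w), (⟨v, w, β⟩ : SArrow V) ≠ ⟨v, v, α⟩ →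
      ¬ ρ ((cpow (Quiver.Hom.toPath α) (d - 1)).comp (Quiver.Hom.toPath β))) ∧
  (∀ ⦃w : V⦄ (β : w ⟶ v), (⟨w, v, β⟩ : SArrow V) ≠ ⟨v, v, α⟩ →
      ¬ ρ ((Quiver.Hom.toPath β).comp (cpow (Quiver.Hom.toPath α) (d - 1))))

/-- Condition (C1): (1) every loop `α` satisfies `α^d ∈ ρ` and no element of `ρ` has the
form `α^{d-1}β` or `βα^{d-1}` with `β` an arrow distinct from `α`; (2) for every closed
trail `T` with `ℓ(T) > 1` and `ρ_T ⊆ ρ`, no element of `ρ∖ρ_T` begins or ends with an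
arrow of `T`. -/
def CondC1 (d : ℕ) (ρ : PathSet V) : Prop :=
  (∀ (v : V) (α : v ⟶ v), CondLoop d ρ α) ∧
  (∀ ⦃a : V⦄ (T : Quiver.Path a a), IsClosedTrail T → 1 < T.length → RhoTSub d ρ T →
    ∀ ⦃x y : V⦄ (q : Quiver.Path x y), ρ q → ¬(q.length = d ∧ LiesOn q T) →
      (∀ ⦃w : V⦄ (e : x ⟶ w) (q' : Quiver.Path w y),
          q = (Quiver.Hom.toPath e).comp q' → (⟨x, w, e⟩ : SArrow V) ∉ arrowList T) ∧
      (∀ ⦃w : V⦄ (e : w ⟶ y) (q' : Quiver.Path x w),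
          q = q'.comp (Quiver.Hom.toPath e) → (⟨w, y, e⟩ : SArrow V) ∉ arrowList T))

/-- Condition (C2): (1) for every `A`-loop `c`, some rotation `c'` of `c` satisfies
`c'^d ∈ ρ` and no element of `ρ` has the form `c'^{d-1}β` or `βc'^{d-1}` with
`β` a path of length `A` distinct from `c'`; (2) for every closed `A`-trail `T` with at
least two segments and `ρ_T ⊆ ρ`, no element of `ρ∖ρ_T` begins or ends with an
`A`-segment of `T`. -/
def CondC2 (D A d : ℕ) (ρ : PathSet V) : Prop :=
  (∀ ⦃v : V⦄ (c : Quiver.Path v v), c.length = A →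
    ∃ (w : V) (p : Quiver.Path v w) (q : Quiver.Path w v), c = p.comp q ∧ p.length < A ∧
      ρ (cpow (q.comp p) d) ∧
      (∀ ⦃x : V⦄ (β : Quiver.Path w x), β.length = A →
          (⟨w, x, β⟩ : SPath V) ≠ ⟨w, w, q.comp p⟩ →
          ¬ ρ ((cpow (q.comp p) (d - 1)).comp β)) ∧
      (∀ ⦃x : V⦄ (β : Quiver.Path x w), β.length = A →
          (⟨x, w, β⟩ : SPath V) ≠ ⟨w, w, q.comp p⟩ →
          ¬ ρ (β.comp (cpow (q.comp p) (d - 1))))) ∧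
  (∀ ⦃a : V⦄ (T : Quiver.Path a a) (L : List (SPath V)),
      SegChain A L a a T → L.Nodup → 2 ≤ L.length → ARhoTSub D A ρ T →
      ∀ ⦃x y : V⦄ (q : Quiver.Path x y), ρ q → ¬(q.length = D ∧ ALiesOn A q T) →
        (∀ ⦃w : V⦄ (α : Quiver.Path x w) (q' : Quiver.Path w y),
            q = α.comp q' → (⟨x, w, α⟩ : SPath V) ∉ L) ∧
        (∀ ⦃w : V⦄ (α : Quiver.Path w y) (q' : Quiver.Path x w),
            q = q'.comp α → (⟨w, y, α⟩ : SPath V) ∉ L))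

/-! ### Auxiliary lemmas for stmt_7 -/

lemma arrowList_comp' {a b c : V} (p : Quiver.Path a b) (q : Quiver.Path b c) :
    arrowList (p.comp q) = arrowList p ++ arrowList q := by
  induction q with
  | nil => simp [arrowList]
  | cons q' e ih => simp [arrowList, ih]

lemma length_arrowList' {a b : V} (p : Quiver.Path a b) :
    (arrowList p).length = p.length := by
  induction p with
  | nil => rfl
  | cons p e ih => simp [arrowList, ih]

lemma eq_nil_of_arrowList' {a b : V} (p : Quiver.Path a b) (h : arrowList p = []) :
    a = b := by
  cases p with
  | nil => rfl
  | cons p' e => simp [arrowList] at h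

lemma path_eq_of_arrowList' {a b c : V} (p : Quiver.Path a b) (q : Quiver.Path a c)
    (h : arrowList p = arrowList q) : b = c ∧ HEq p q := by
  induction p generalizing c q with
  | nil =>
    cases q with
    | nil => exact ⟨rfl, HEq.rfl⟩
    | cons q' e => simp [arrowList] at h
  | cons p' e ih =>
    cases q with
    | nil => simp [arrowList] at h
    | cons q' f =>
      simp only [arrowList] at h
      obtain ⟨h1, h2⟩ := List.append_inj' h rfl
      obtain ⟨hm, hp⟩ := ih q' h1
      subst hm
      obtain rfl := eq_of_heq hp
      injection h2 with h3 h3'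
      injection h3 with h4 h5
      injection h5 with h6 h7
      subst h6
      rw [eq_of_heq h7]
      exact ⟨rfl, HEq.rfl⟩

lemma arrowList_src' {a b : V} (p : Quiver.Path a b) :
    ∀ {x y : V} (e : x ⟶ y) (tl : List (SArrow V)),
      arrowList p = ⟨x, y, e⟩ :: tl → x = a := by
  induction p with
  | nil => intro x y e tl h; simp [arrowList] at h
  | cons p' f ih =>
    intro x y e tl h
    simp only [arrowList] at h
    rcases hAL : arrowList p' with _ | ⟨hd, tl'⟩
    · rw [hAL] at h
      simp only [List.nil_append, List.cons.injEq] at h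
      have h1 : (⟨x, y, e⟩ : SArrow V).1 = _ := congrArg Sigma.fst h.1.symm
      exact h1.trans (eq_nil_of_arrowList' p' hAL).symm
    · rw [hAL, List.cons_append] at h
      have h1 := (List.cons.injEq _ _ _ _ ▸ h).1
      exact ih e tl' (by rw [hAL, ← h1])

lemma cpow_comm' {a : V} (T : Quiver.Path a a) (n : ℕ) :
    (cpow T n).comp T = T.comp (cpow T n) := by
  induction n with
  | zero => simp [cpow]
  | succ n ih =>
    show ((cpow T n).comp T).comp T = T.comp ((cpow T n).comp T)
    rw [ih, Quiver.Path.comp_assoc, ih]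

lemma cpow_add' {a : V} (T : Quiver.Path a a) (m n : ℕ) :
    cpow T (m + n) = (cpow T m).comp (cpow T n) := by
  induction n with
  | zero => rfl
  | succ n ih =>
    show (cpow T (m + n)).comp T = (cpow T m).comp ((cpow T n).comp T)
    rw [ih, Quiver.Path.comp_assoc]

lemma length_cpow_toPath' {a : V} (e : a ⟶ a) (n : ℕ) :
    (cpow (Quiver.Hom.toPath e) n).length = n := by
  induction n with
  | zero => rfl
  | succ n ih =>
    show ((cpow (Quiver.Hom.toPath e) n).comp (Quiver.Hom.toPath e)).length = n + 1
    rw [Quiver.Path.length_comp, ih]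
    rfl

lemma arrowList_cpow_toPath' {a : V} (e : a ⟶ a) (n : ℕ) :
    arrowList (cpow (Quiver.Hom.toPath e) n)
      = List.replicate n (⟨a, a, e⟩ : SArrow V) := by
  induction n with
  | zero => rfl
  | succ n ih =>
    show arrowList ((cpow (Quiver.Hom.toPath e) n).comp (Quiver.Hom.toPath e)) = _
    rw [arrowList_comp', ih, List.replicate_succ']
    rfl

/-- Spell out a path at a loop vertex from a sequence of loops. -/
def wordPath {a : V} (ch : ℕ → (a ⟶ a)) : ℕ → Quiver.Path a a
  | 0 => Quiver.Path.nil
  | n + 1 => (wordPath ch n).cons (ch n)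

lemma length_wordPath {a : V} (ch : ℕ → (a ⟶ a)) (n : ℕ) :
    (wordPath ch n).length = n := by
  induction n with
  | zero => rfl
  | succ n ih => simp [wordPath, ih]

lemma arrowList_wordPath {a : V} (ch : ℕ → (a ⟶ a)) (n : ℕ) :
    arrowList (wordPath ch n)
      = (List.range n).map (fun j => (⟨a, a, ch j⟩ : SArrow V)) := by
  induction n with
  | zero => rfl
  | succ n ih => simp [wordPath, arrowList, ih, List.range_succ]

lemma range'_split' (s m n : ℕ) :
    List.range' s (m + n) = List.range' s m ++ List.range' (s + m) n := by
  induction m generalizing s with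
  | zero => simp
  | succ m ih =>
    rw [show m + 1 + n = (m + n) + 1 by omega, List.range'_succ, List.range'_succ,
      ih (s + 1), List.cons_append, show s + 1 + m = s + (m + 1) by omega]

lemma map_range'_replicate {α : Type*} (g : ℕ → α) (c : α) (s n : ℕ)
    (h : ∀ j, s ≤ j → j < s + n → g j = c) :
    (List.range' s n).map g = List.replicate n c := by
  induction n generalizing s with
  | zero => simp
  | succ n ih =>
    rw [List.range'_succ, List.map_cons, List.replicate_succ,
      h s le_rfl (by omega), ih (s + 1) (fun j h1 h2 => h j (by omega) (by omega))]

/-- two distinct loops `α`, `β` satisfying the conditions of (C1)(1) are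
based at distinct vertices. -/
theorem stmt_7 {V : Type u} [Quiver.{v + 1} V] [Fintype V] [∀ a b : V, Fintype (a ⟶ b)]
    (d : ℕ) (hd : 2 ≤ d) (ρ : PathSet V)
    (hρlen : ∀ ⦃a b : V⦄ (p : Quiver.Path a b), ρ p → p.length = d)
    (hcov : DCovering d ρ)
    (hfin : ∃ N : ℕ, ∀ ⦃x y : V⦄ (p : Quiver.Path x y), p.length = N →
      ∃ (x' y' : V) (s : Quiver.Path x' y'), ρ s ∧ IsSubpathP s p)
    {u w : V} (α : u ⟶ u) (β : w ⟶ w)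
    (hne : (⟨u, u, α⟩ : SArrow V) ≠ ⟨w, w, β⟩)
    (hαd : ρ (cpow (Quiver.Hom.toPath α) d))
    (hβd : ρ (cpow (Quiver.Hom.toPath β) d))
    (hα1 : ∀ ⦃z : V⦄ (γ : u ⟶ z), (⟨u, z, γ⟩ : SArrow V) ≠ ⟨u, u, α⟩ →
      ¬ ρ ((cpow (Quiver.Hom.toPath α) (d - 1)).comp (Quiver.Hom.toPath γ)))
    (hα2 : ∀ ⦃z : V⦄ (γ : z ⟶ u), (⟨z, u, γ⟩ : SArrow V) ≠ ⟨u, u, α⟩ →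
      ¬ ρ ((Quiver.Hom.toPath γ).comp (cpow (Quiver.Hom.toPath α) (d - 1))))
    (hβ1 : ∀ ⦃z : V⦄ (γ : w ⟶ z), (⟨w, z, γ⟩ : SArrow V) ≠ ⟨w, w, β⟩ →
      ¬ ρ ((cpow (Quiver.Hom.toPath β) (d - 1)).comp (Quiver.Hom.toPath γ)))
    (hβ2 : ∀ ⦃z : V⦄ (γ : z ⟶ w), (⟨z, w, γ⟩ : SArrow V) ≠ ⟨w, w, β⟩ →
      ¬ ρ ((Quiver.Hom.toPath γ).comp (cpow (Quiver.Hom.toPath β) (d - 1)))) :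
    u ≠ w := by
  intro huw
  subst huw
  -- now everything is based at w
  have hαβ : (⟨u, u, β⟩ : SArrow V) ≠ ⟨u, u, α⟩ := fun hh => hne hh.symm
  obtain ⟨N, hN⟩ := hfin
  set ch : ℕ → (u ⟶ u) := fun j => if j % d = 0 then β else α with hch
  obtain ⟨x, y, s, hρs, p₁, p₂, hdec⟩ := hN (wordPath ch N) (length_wordPath ch N)
  have hslen : s.length = d := hρlen s hρs
  set g : ℕ → SArrow V := fun j => (⟨u, u, ch j⟩ : SArrow V) with hg
  have hAL : (List.range N).map g = arrowList p₁ ++ (arrowList s ++ arrowList p₂) := by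
    rw [← arrowList_wordPath, hdec, arrowList_comp', arrowList_comp', List.append_assoc]
  set i := (arrowList p₁).length with hi
  set jj := (arrowList p₂).length with hjj
  have hsALlen : (arrowList s).length = d := by rw [length_arrowList', hslen]
  have hNlen : N = i + (d + jj) := by
    have := congrArg List.length hAL
    simpa [hsALlen] using this
  -- the offset of β in the window
  have hmod : ∀ t, t < d → (i + t) % d = (i % d + t) % d := by
    intro t ht
    rw [Nat.add_mod, Nat.mod_eq_of_lt ht]
  have hrd : i % d < d := Nat.mod_lt _ (by omega)
  obtain ⟨k, hkd, hik, hnk⟩ : ∃ k, k ≤ d - 1 ∧ (i + k) % d = 0 ∧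
      ∀ t, t < d → t ≠ k → (i + t) % d ≠ 0 := by
    by_cases hr0 : i % d = 0
    · refine ⟨0, by omega, by simpa using hr0, ?_⟩
      intro t htd htk
      rw [hmod t htd, hr0, Nat.zero_add, Nat.mod_eq_of_lt htd]
      omega
    · refine ⟨d - i % d, by omega, ?_, ?_⟩
      · rw [hmod _ (by omega), show i % d + (d - i % d) = d by omega, Nat.mod_self]
      · intro t htd htk
        rw [hmod t htd]
        by_cases h2 : i % d + t < d
        · rw [Nat.mod_eq_of_lt h2]; omega
        · rw [Nat.mod_eq_sub_mod (by omega), Nat.mod_eq_of_lt (by omega)]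
          omega
  -- split the range
  have hrange : List.range' i d
      = List.range' i k ++ (List.range' (i + k) 1 ++ List.range' (i + k + 1) (d - 1 - k)) := by
    conv_lhs => rw [show d = k + (1 + (d - 1 - k)) by omega]
    rw [range'_split', range'_split', show i + k + 1 = i + k + 1 from rfl]
  have hsplitN : List.range N
      = List.range' 0 i ++ (List.range' i d ++ List.range' (i + d) jj) := by
    rw [List.range_eq_range', hNlen, range'_split', range'_split']
    simp
  -- identify arrowList s with the window
  have hwin : arrowList s = (List.range' i d).map g := by
    rw [hsplitN] at hAL
    simp only [List.map_append] at hAL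
    obtain ⟨h1, h2⟩ := List.append_inj hAL.symm (by simp [hi])
    obtain ⟨h3, h4⟩ := List.append_inj h2 (by simp [hsALlen])
    exact h3
  have hY : (List.range' i d).map g
      = List.replicate k (⟨u, u, α⟩ : SArrow V)
        ++ ((⟨u, u, β⟩ : SArrow V) :: List.replicate (d - 1 - k) (⟨u, u, α⟩ : SArrow V)) := by
    rw [hrange]
    simp only [List.map_append]
    congr 1
    · apply map_range'_replicate
      intro j h1 h2
      have h3 : j % d ≠ 0 := by
        have := hnk (j - i) (by omega) (by omega)
        have h4 : i + (j - i) = j := by omega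
        rwa [h4] at this
      simp [hg, hch, if_neg h3]
    · rw [List.range'_one, List.map_cons, List.map_nil, List.cons_append, List.nil_append]
      congr 1
      · simp [hg, hch, if_pos hik]
      · apply map_range'_replicate
        intro j h1 h2
        have h3 : j % d ≠ 0 := by
          have := hnk (j - i) (by omega) (by omega)
          have h4 : i + (j - i) = j := by omega
          rwa [h4] at this
        simp [hg, hch, if_neg h3]
  have hALs : arrowList s
      = List.replicate k (⟨u, u, α⟩ : SArrow V)
        ++ ((⟨u, u, β⟩ : SArrow V) :: List.replicate (d - 1 - k) (⟨u, u, α⟩ : SArrow V)) :=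
    hwin.trans hY
  -- the start of s is w
  have hx : x = u := by
    by_cases hk0 : k = 0
    · rw [hk0, List.replicate_zero, List.nil_append] at hALs
      exact (arrowList_src' s β _ hALs).symm
    · obtain ⟨k', hk'⟩ : ∃ k', k = k' + 1 := ⟨k - 1, by omega⟩
      rw [hk', List.replicate_succ, List.cons_append] at hALs
      exact (arrowList_src' s α _ hALs).symm
  subst hx
  -- identify s with the concrete path W
  have hALW : arrowList ((cpow (Quiver.Hom.toPath α) k).comp
      ((Quiver.Hom.toPath β).comp (cpow (Quiver.Hom.toPath α) (d - 1 - k))))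
      = List.replicate k (⟨x, x, α⟩ : SArrow V)
        ++ ((⟨x, x, β⟩ : SArrow V) :: List.replicate (d - 1 - k) (⟨x, x, α⟩ : SArrow V)) := by
    rw [arrowList_comp', arrowList_comp', arrowList_cpow_toPath', arrowList_cpow_toPath']
    rfl
  obtain ⟨hy, hsW⟩ := path_eq_of_arrowList' s _ (hALs.trans hALW.symm)
  subst hy
  have hsW' : s = (cpow (Quiver.Hom.toPath α) k).comp
      ((Quiver.Hom.toPath β).comp (cpow (Quiver.Hom.toPath α) (d - 1 - k))) :=
    eq_of_heq hsW
  rw [hsW'] at hρs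
  clear hsW hsW' hALs hwin hY hALW hAL hdec hsplitN hrange
  -- case analysis on k
  by_cases hk0 : k = 0
  · rw [hk0] at hρs
    simp only [Nat.sub_zero] at hρs
    have : ρ ((Quiver.Hom.toPath β).comp (cpow (Quiver.Hom.toPath α) (d - 1))) := by
      simpa [cpow] using hρs
    exact hα2 β hαβ this
  · by_cases hk1 : k = d - 1
    · rw [hk1] at hρs
      have h0 : d - 1 - (d - 1) = 0 := by omega
      rw [h0] at hρs
      have : ρ ((cpow (Quiver.Hom.toPath α) (d - 1)).comp (Quiver.Hom.toPath β)) := by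
        simpa [cpow] using hρs
      exact hα1 β hαβ this
    · -- middle case: use the covering condition
      have e1 : (Quiver.Hom.toPath α).comp (cpow (Quiver.Hom.toPath α) (d - 1))
          = cpow (Quiver.Hom.toPath α) d := by
        rw [← cpow_comm']
        conv_rhs => rw [show d = (d - 1) + 1 by omega]
        rfl
      have key : ρ ((cpow (Quiver.Hom.toPath α) (d - 1)).comp (Quiver.Hom.toPath β)) := by
        apply hcov (cpow (Quiver.Hom.toPath α) (d - k)) (cpow (Quiver.Hom.toPath α) k)
          ((Quiver.Hom.toPath β).comp (cpow (Quiver.Hom.toPath α) (d - 1 - k)))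
        · rw [← cpow_add', show d - k + k = d by omega]
          exact hαd
        · exact hρs
        · rw [length_cpow_toPath']; omega
        · rw [Quiver.Path.length_comp, length_cpow_toPath']
          show d - 1 + 1 = d
          omega
        · refine ⟨Quiver.Hom.toPath α, cpow (Quiver.Hom.toPath α) (d - 1 - k), ?_⟩
          rw [← cpow_add', show d - k + k = d by omega, ← e1]
          simp only [Quiver.Path.comp_assoc]
      exact hα1 β hαβ key
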